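/- For every k ≥ 0: J_{k+1} ⊆ D_k, 0 ∉ J_{k+1}, and J_{k+1} ∩ I_{k+1} = ∅. Consequently, for all integers 0 < k < k′: J_{k′} ⊆ D_{k′−1} ⊆ I_k, and J_k ∩ J_{k′} = ∅. -/

import Mathlib

open MeasureTheory Filter Set

private def Fb : ℕ → ℕ
  | 0 => 0
  | 1 => 1
  | n+2 => Fb (n+1) + Fb n

private lemma Fb_add (n : ℕ) : Fb (n+2) = Fb (n+1) + Fb n := rfl

private lemma Fb_one_le : ∀ n : ℕ, 1 ≤ Fb (n+1) := by
  intro n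
  induction n with
  | zero => exact le_refl 1
  | succ m ih => rw [Fb_add]; omega

private lemma Fb_mono : Monotone Fb := by
  apply monotone_nat_of_le_succ
  intro n
  cases n with
  | zero => norm_num [Fb]
  | succ m => rw [Fb_add]; omega

set_option maxHeartbeats 4000000 in
theorem J_intervals_nested_and_disjoint
    (lam : ℝ) (hlam1 : 1 < lam) (hlam2 : lam ≤ 2)
    (T : ℝ → ℝ) (hT : ∀ x : ℝ, T x = lam * (1 - |x|) - 1)
    (c : ℕ → ℝ) (hc : ∀ i : ℕ, c i = T^[i] 0)
    (S : ℤ → ℕ) (hSm2 : S (-2) = 0) (hSm1 : S (-1) = 1)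
    (hSrec : ∀ k : ℤ, 0 ≤ k → S k = S (k - 1) + S (k - 2))
    (hcne : ∀ j : ℕ, 1 ≤ j → c j ≠ 0)
    (hc2neg : c 2 < 0) (hc1pos : 0 < c 1)
    (hsame : ∀ k : ℤ, 2 ≤ k → ∀ j : ℕ, 1 ≤ j → j < S (k - 2) →
      (0 < c (S (k - 1) + j) ↔ 0 < c j))
    (hopp : ∀ k : ℤ, 2 ≤ k → (0 < c (S k) ↔ c (S (k - 2)) < 0))
    (hdec : ∀ k : ℤ, 0 ≤ k → |c (S (k + 1))| < |c (S k)|)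
    (hc34 : |c 3| < |c 4|)
    (I : ℤ → Set ℝ)
    (hIdef : ∀ k : ℤ, 0 ≤ k →
      (Even k → I k = Set.uIcc (c (S k)) (c (S (k + 1)))) ∧
      (¬ Even k → I k = Set.uIcc (c (S k)) (c (S (k + 2)))))
    (J : ℤ → Set ℝ)
    (hJdef : ∀ k : ℤ, 1 ≤ k → J k = Set.uIcc (c (S (k - 1))) (c (S (k + 1) + S (k - 1))))
    (D : ℤ → Set ℝ) (hDdef : ∀ k : ℤ, D k = Set.uIcc 0 (c (S k))) :
    (∀ k : ℤ, 0 ≤ k → J (k + 1) ⊆ D k ∧ (0 : ℝ) ∉ J (k + 1) ∧ J (k + 1) ∩ I (k + 1) = ∅) ∧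
    (∀ k k' : ℤ, 0 < k → k < k' → J k' ⊆ D (k' - 1) ∧ D (k' - 1) ⊆ I k ∧ J k ∩ J k' = ∅) := by
  have hlam0 : (0:ℝ) < lam := lt_trans one_pos hlam1
  have hcsucc : ∀ n : ℕ, c (n+1) = lam * (1 - |c n|) - 1 := by
    intro n
    rw [hc (n+1), Function.iterate_succ_apply', ← hc n, hT]
  have c0 : c 0 = 0 := by rw [hc]; rfl
  have c1 : c 1 = lam - 1 := by rw [hcsucc 0, c0, abs_zero]; ring
  have c2 : c 2 = -(lam - 1)^2 := by
    rw [hcsucc 1, c1, abs_of_pos (by linarith : (0:ℝ) < lam - 1)]; ring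
  -- bridge S ↔ Fb
  have hSn : ∀ n : ℕ, S ((n:ℤ) - 2) = Fb n := by
    intro n
    induction n using Nat.strong_induction_on with
    | _ n ih =>
      match n with
      | 0 => simpa [Fb] using hSm2
      | 1 => simpa [Fb] using hSm1
      | (m+2) =>
        rw [show ((m+2:ℕ):ℤ) - 2 = (m:ℤ) by push_cast; ring, hSrec (m:ℤ) (Int.natCast_nonneg _),
          show (m:ℤ) - 1 = ((m+1:ℕ):ℤ) - 2 by push_cast; ring, ih (m+1) (by omega),
          show (m:ℤ) - 2 = ((m:ℕ):ℤ) - 2 from rfl, ih m (by omega), Fb_add]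
  have hSn' : ∀ n : ℕ, S (n:ℤ) = Fb (n+2) := by
    intro n
    have h := hSn (n+2)
    rwa [show ((n+2:ℕ):ℤ) - 2 = (n:ℤ) by push_cast; ring] at h
  have hcneF : ∀ n : ℕ, c (Fb (n+1)) ≠ 0 := fun n => hcne _ (Fb_one_le n)
  have hApos : ∀ n : ℕ, 0 < |c (Fb (n+1))| := fun n => abs_pos.mpr (hcneF n)
  -- translated hypotheses
  have hsameN : ∀ n : ℕ, ∀ j : ℕ, 1 ≤ j → j < Fb (n+2) →
      (0 < c (Fb (n+3) + j) ↔ 0 < c j) := by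
    intro n j h1 h2
    have h := hsame ((n:ℤ)+2) (by omega) j h1
      (by rwa [show (n:ℤ)+2-2 = ((n:ℕ):ℤ) from by ring, hSn'])
    rwa [show (n:ℤ)+2-1 = ((n+1:ℕ):ℤ) by push_cast; ring, hSn'] at h
  have hoppN : ∀ n : ℕ, (0 < c (Fb (n+4)) ↔ c (Fb (n+2)) < 0) := by
    intro n
    have h := hopp ((n:ℤ)+2) (by omega)
    rwa [show (n:ℤ)+2 = ((n+2:ℕ):ℤ) by push_cast; ring, hSn',
      show ((n+2:ℕ):ℤ)-2 = ((n:ℕ):ℤ) by push_cast; ring, hSn'] at h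
  have hdecN : ∀ n : ℕ, |c (Fb (n+3))| < |c (Fb (n+2))| := by
    intro n
    have h := hdec (n:ℤ) (Int.natCast_nonneg _)
    rwa [show (n:ℤ)+1 = ((n+1:ℕ):ℤ) by push_cast; ring, hSn', hSn'] at h
  have hAmono : ∀ i j : ℕ, i ≤ j → |c (Fb (j+2))| ≤ |c (Fb (i+2))| := by
    intro i j hij
    exact antitone_nat_of_succ_le (f := fun m => |c (Fb (m+2))|)
      (fun n => (hdecN n).le) hij
  -- sign pattern
  have hsgn : ∀ n : ℕ, (n % 4 = 0 ∨ n % 4 = 3 → 0 < c (Fb (n+2))) ∧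
      (¬(n % 4 = 0 ∨ n % 4 = 3) → c (Fb (n+2)) < 0) := by
    intro n
    induction n using Nat.strong_induction_on with
    | _ n ih =>
      match n with
      | 0 => exact ⟨fun _ => hc1pos, fun h => absurd (Or.inl rfl) h⟩
      | 1 => exact ⟨fun h => by omega, fun _ => hc2neg⟩
      | (m+2) =>
        refine ⟨fun h => (hoppN m).mpr ((ih m (by omega)).2 (by omega)), fun h => ?_⟩
        have hnp : ¬ (0 < c (Fb (m+4))) := fun hp =>
          absurd ((ih m (by omega)).1 (by omega)) (not_lt.mpr ((hoppN m).mp hp).le)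
        exact lt_of_le_of_ne (not_lt.mp hnp) (hcneF (m+3))
  -- lam^2 > lam + 1
  have hphi : lam + 1 < lam^2 := by
    have h3 : c 3 < 0 := by
      have := (hsgn 2).2 (by omega)
      simpa [show Fb 4 = 3 from rfl] using this
    rw [hcsucc 2, c2, abs_neg, abs_of_nonneg (sq_nonneg _)] at h3
    nlinarith [sq_nonneg (lam - 1), mul_pos (sub_pos.mpr hlam1) (sub_pos.mpr hlam1)]
  -- key dynamical lemma
  have hkey : ∀ j : ℕ, 1 ≤ j → ∀ n m : ℕ, 1 ≤ n → 1 ≤ m →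
      (∀ i, 1 ≤ i → i < j → (0 < c (n+i) ↔ 0 < c i)) →
      (∀ i, 1 ≤ i → i < j → (0 < c (m+i) ↔ 0 < c i)) →
      (c (n+j) - c j) * |c m| = (c (m+j) - c j) * |c n| ∧
      |c (n+j) - c j| = lam ^ j * |c n| := by
    intro j hj
    induction j, hj using Nat.le_induction with
    | base =>
      intro n m hn hm _ _
      have e : ∀ p : ℕ, c (p+1) - c 1 = -(lam * |c p|) := by
        intro p
        rw [hcsucc p, c1]; ring
      constructor
      · rw [e n, e m]; ring
      · rw [e n, abs_neg, abs_mul, abs_of_pos hlam0, abs_abs, pow_one]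
    | succ j hj ih =>
      intro n m hn hm Hn Hm
      obtain ⟨E1, E2⟩ := ih n m hn hm (fun i h1 h2 => Hn i h1 (by omega))
        (fun i h1 h2 => Hm i h1 (by omega))
      have hcj : c j ≠ 0 := hcne j hj
      have step : ∀ p : ℕ, 1 ≤ p → (0 < c (p+j) ↔ 0 < c j) →
          c (p+(j+1)) - c (j+1) = (if 0 < c j then -lam else lam) * (c (p+j) - c j) := by
        intro p hp hiff
        have h1 : c (p+(j+1)) = lam * (1 - |c (p+j)|) - 1 := by
          rw [show p+(j+1) = (p+j)+1 by ring, hcsucc]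
        by_cases h : 0 < c j
        · have hpj : 0 < c (p+j) := hiff.mpr h
          rw [h1, hcsucc j, if_pos h, abs_of_pos hpj, abs_of_pos h]; ring
        · have hj' : c j < 0 := lt_of_le_of_ne (not_lt.mp h) hcj
          have hpj : c (p+j) < 0 := lt_of_le_of_ne (not_lt.mp (fun hh => h (hiff.mp hh)))
            (hcne (p+j) (by omega))
          rw [h1, hcsucc j, if_neg h, abs_of_neg hpj, abs_of_neg hj']; ring
      have sn := step n hn (Hn j hj (by omega))
      have sm := step m hm (Hm j hj (by omega))
      constructor
      · rw [sn, sm]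
        calc (if 0 < c j then -lam else lam) * (c (n+j) - c j) * |c m|
            = (if 0 < c j then -lam else lam) * ((c (n+j) - c j) * |c m|) := by ring
          _ = (if 0 < c j then -lam else lam) * ((c (m+j) - c j) * |c n|) := by rw [E1]
          _ = (if 0 < c j then -lam else lam) * (c (m+j) - c j) * |c n| := by ring
      · rw [sn, abs_mul, E2]
        have habs : |(if 0 < c j then -lam else lam)| = lam := by
          split
          · rw [abs_neg, abs_of_pos hlam0]
          · exact abs_of_pos hlam0
        rw [habs, pow_succ]; ring
  -- the fundamental relation
  have hR : ∀ n : ℕ, |c (Fb (n+3))| + |c (Fb (n+1))| = lam ^ (Fb (n+1)) * |c (Fb (n+2))| := by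
    intro n
    match n with
    | 0 =>
      have h1 : |c 1| = lam - 1 := by rw [c1]; exact abs_of_pos (by linarith)
      have h2 : |c 2| = (lam-1)^2 := by rw [c2, abs_neg]; exact abs_of_nonneg (sq_nonneg _)
      show |c (Fb 3)| + |c (Fb 1)| = lam ^ (Fb 1) * |c (Fb 2)|
      rw [show Fb 3 = 2 from rfl, show Fb 1 = 1 from rfl, show Fb 2 = 1 from rfl, h1, h2,
        pow_one]
      ring
    | (m+1) =>
      have hkj := hkey (Fb (m+2)) (Fb_one_le (m+1)) (Fb (m+3)) (Fb (m+3))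
        (Fb_one_le (m+2)) (Fb_one_le (m+2))
        (fun i h1 h2 => hsameN m i h1 h2) (fun i h1 h2 => hsameN m i h1 h2)
      have e2 := hkj.2
      rw [show Fb (m+3) + Fb (m+2) = Fb (m+4) from (Fb_add (m+2)).symm] at e2
      have h2ne : c (Fb (m+2)) ≠ 0 := hcneF (m+1)
      rcases h2ne.lt_or_gt with hneg | hpos
      · have h4 : 0 < c (Fb (m+4)) := (hoppN m).mpr hneg
        have habs : |c (Fb (m+4)) - c (Fb (m+2))| = |c (Fb (m+4))| + |c (Fb (m+2))| := by
          rw [abs_of_pos h4, abs_of_neg hneg,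
            abs_of_pos (by linarith : (0:ℝ) < c (Fb (m+4)) - c (Fb (m+2)))]
          ring
        rw [← habs]
        exact e2
      · have h4 : c (Fb (m+4)) < 0 := by
          have hnp : ¬ (0 < c (Fb (m+4))) := fun hp =>
            absurd hpos (not_lt.mpr ((hoppN m).mp hp).le)
          exact lt_of_le_of_ne (not_lt.mp hnp) (hcneF (m+3))
        have habs : |c (Fb (m+4)) - c (Fb (m+2))| = |c (Fb (m+4))| + |c (Fb (m+2))| := by
          rw [abs_of_neg h4, abs_of_pos hpos,
            abs_of_neg (by linarith : c (Fb (m+4)) - c (Fb (m+2)) < 0)]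
          ring
        rw [← habs]
        exact e2
  -- position of c (Fb (n+4) + Fb (n+2))
  have hposMain : ∀ n : ℕ,
      (0 < c (Fb (n+2)) → c (Fb (n+4) + Fb (n+2)) =
        |c (Fb (n+2))| - lam ^ (Fb (n+2)) * |c (Fb (n+4))|) ∧
      (c (Fb (n+2)) < 0 → c (Fb (n+4) + Fb (n+2)) =
        -(|c (Fb (n+2))| - lam ^ (Fb (n+2)) * |c (Fb (n+4))|)) := by
    intro n
    have hkj := hkey (Fb (n+2)) (Fb_one_le (n+1)) (Fb (n+4)) (Fb (n+3))
      (Fb_one_le (n+3)) (Fb_one_le (n+2))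
      (fun i h1 h2 => hsameN (n+1) i h1 (lt_of_lt_of_le h2 (Fb_mono (by omega))))
      (fun i h1 h2 => hsameN n i h1 h2)
    obtain ⟨E1, -⟩ := hkj
    rw [show Fb (n+3) + Fb (n+2) = Fb (n+4) from (Fb_add (n+2)).symm] at E1
    have hRn := hR (n+1)
    have hB : (0:ℝ) < |c (Fb (n+3))| := hApos (n+2)
    constructor
    · intro hx
      have h4 : c (Fb (n+4)) < 0 := by
        have hnp : ¬ (0 < c (Fb (n+4))) := fun hp =>
          absurd hx (not_lt.mpr ((hoppN n).mp hp).le)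
        exact lt_of_le_of_ne (not_lt.mp hnp) (hcneF (n+3))
      have hv : c (Fb (n+4)) - c (Fb (n+2)) = -(lam ^ (Fb (n+2)) * |c (Fb (n+3))|) := by
        rw [← hRn, abs_of_neg h4, abs_of_pos hx]; ring
      rw [hv] at E1
      have h2 : (c (Fb (n+4) + Fb (n+2)) - c (Fb (n+2))) * |c (Fb (n+3))| =
          (-(lam ^ (Fb (n+2)) * |c (Fb (n+4))|)) * |c (Fb (n+3))| := by
        rw [E1]; ring
      have h3 := mul_right_cancel₀ (ne_of_gt hB) h2
      rw [abs_of_pos hx]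
      linarith [h3]
    · intro hx
      have h4 : 0 < c (Fb (n+4)) := (hoppN n).mpr hx
      have hv : c (Fb (n+4)) - c (Fb (n+2)) = lam ^ (Fb (n+2)) * |c (Fb (n+3))| := by
        rw [← hRn, abs_of_pos h4, abs_of_neg hx]; ring
      rw [hv] at E1
      have h2 : (c (Fb (n+4) + Fb (n+2)) - c (Fb (n+2))) * |c (Fb (n+3))| =
          (lam ^ (Fb (n+2)) * |c (Fb (n+4))|) * |c (Fb (n+3))| := by
        rw [E1]; ring
      have h3 := mul_right_cancel₀ (ne_of_gt hB) h2
      rw [abs_of_neg hx]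
      linarith [h3]
  -- main gap inequalities
  have hGap : ∀ n : ℕ,
      |c (Fb (n+5))| < |c (Fb (n+2))| - lam ^ (Fb (n+2)) * |c (Fb (n+4))| ∧
      (1 ≤ n → |c (Fb (n+3))| < |c (Fb (n+2))| - lam ^ (Fb (n+2)) * |c (Fb (n+4))|) := by
    have harith : ∀ X Y a b d e : ℝ, lam ≤ X → lam^2 ≤ Y → 0 < d →
        e < d → d + a = Y * b → e + b = Y * X * d → b + Y * d < a := by
      intro X Y a b d e hX hY hd hed h1 h2
      have hX1 : (1:ℝ) < X := lt_of_lt_of_le hlam1 hX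
      have hY1 : (1:ℝ) < Y := by nlinarith
      have h3 : (Y * X - 1) * d < b := by nlinarith
      have h4 : 2 ≤ X * (Y - 1) := by
        nlinarith [mul_lt_mul_of_pos_left hphi hlam0,
          mul_nonneg (sub_nonneg.mpr hX) (by nlinarith : (0:ℝ) ≤ Y - 1),
          mul_nonneg hlam0.le (sub_nonneg.mpr hY)]
      have h5 : (Y + 1) * d ≤ (Y - 1) * ((Y * X - 1) * d) := by
        nlinarith [mul_nonneg (mul_nonneg (by linarith : (0:ℝ) ≤ Y)
          (by linarith : (0:ℝ) ≤ X * (Y - 1) - 2)) hd.le]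
      have h6 : (Y - 1) * ((Y * X - 1) * d) < (Y - 1) * b :=
        mul_lt_mul_of_pos_left h3 (by linarith)
      nlinarith
    have hM1 : ∀ m : ℕ, |c (Fb (m+4))| + lam ^ (Fb (m+3)) * |c (Fb (m+5))| < |c (Fb (m+3))| := by
      intro m
      have hXp : lam ≤ lam ^ (Fb (m+2)) := by
        calc lam = lam ^ 1 := (pow_one lam).symm
          _ ≤ lam ^ (Fb (m+2)) := pow_le_pow_right₀ hlam1.le (Fb_one_le (m+1))
      have hYp : lam^2 ≤ lam ^ (Fb (m+3)) := by
        apply pow_le_pow_right₀ hlam1.le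
        exact Fb_mono (show 3 ≤ m+3 by omega)
      have e1 := hR (m+2)
      have e2 := hR (m+3)
      rw [show Fb (m+4) = Fb (m+3) + Fb (m+2) from Fb_add (m+2), pow_add] at e2
      exact harith _ _ _ _ _ _ hXp hYp (hApos (m+4)) (hdecN (m+3)) e1 e2
    have hM0 : |c (Fb 5)| + lam ^ (Fb 2) * |c (Fb 4)| < |c (Fb 2)| := by
      have hA1 : |c 1| = lam - 1 := by rw [c1]; exact abs_of_pos (by linarith)
      have hA2 : |c 2| = (lam - 1)^2 := by rw [c2, abs_neg]; exact abs_of_nonneg (sq_nonneg _)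
      have h3neg : c 3 < 0 := (hsgn 2).2 (by omega)
      have hA3 : |c 3| = 1 - lam * (1 - (lam-1)^2) := by
        rw [abs_of_neg h3neg, hcsucc 2, c2, abs_neg, abs_of_nonneg (sq_nonneg _)]; ring
      have e2 := hR 2
      have e3 := hR 3
      have hd := hdecN 3
      rw [show Fb 5 = 5 from rfl, show Fb 3 = 2 from rfl, show Fb 4 = 3 from rfl] at e2
      rw [show Fb 6 = 8 from rfl, show Fb 4 = 3 from rfl, show Fb 5 = 5 from rfl] at e3
      rw [show Fb 6 = 8 from rfl, show Fb 5 = 5 from rfl] at hd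
      show |c 5| + lam ^ (1:ℕ) * |c 3| < |c 1|
      rw [hA2, hA3] at e2
      rw [hA3] at e3
      have hu : |c 5| = lam^2 * (1 - lam * (1 - (lam-1)^2)) - (lam - 1)^2 := by linarith
      have hq : (lam^3 - 1) * |c 5| < 1 - lam * (1 - (lam-1)^2) := by nlinarith [e3, hd]
      rw [hu] at hq
      have hcube : lam^3 < 2*lam + 2 := by
        nlinarith [hq, hphi, sq_nonneg (lam-1), sq_nonneg lam,
          mul_pos (sub_pos.mpr hlam1) (sub_pos.mpr hlam1), sq_nonneg (lam^2-lam-1),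
          mul_nonneg (sub_nonneg.mpr hlam2) (sub_nonneg.mpr hlam1.le),
          sq_nonneg (lam^2-2), sq_nonneg (lam^3-2)]
      rw [pow_one, hA1, hA3, hu]
      nlinarith [mul_pos hlam0 (sub_pos.mpr hlam1), hcube]
    intro n
    refine ⟨?_, fun hn => ?_⟩
    · match n with
      | 0 =>
        show |c (Fb 5)| < |c (Fb 2)| - lam ^ (Fb 2) * |c (Fb 4)|
        linarith [hM0]
      | (m+1) =>
        show |c (Fb (m+6))| < |c (Fb (m+3))| - lam ^ (Fb (m+3)) * |c (Fb (m+5))|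
        have h1 := hM1 m
        have h2 : |c (Fb (m+6))| ≤ |c (Fb (m+4))| := hAmono (m+2) (m+4) (by omega)
        linarith
    · match n, hn with
      | (m+1), _ =>
        show |c (Fb (m+4))| < |c (Fb (m+3))| - lam ^ (Fb (m+3)) * |c (Fb (m+5))|
        linarith [hM1 m]
  -- Part A, ℕ version
  have hMain : ∀ n : ℕ, J ((n:ℤ)+1) ⊆ D (n:ℤ) ∧ (0:ℝ) ∉ J ((n:ℤ)+1) ∧
      J ((n:ℤ)+1) ∩ I ((n:ℤ)+1) = ∅ := by
    intro n
    have hJ : J ((n:ℤ)+1) = Set.uIcc (c (Fb (n+2))) (c (Fb (n+4) + Fb (n+2))) := by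
      rw [hJdef ((n:ℤ)+1) (by omega)]
      rw [show (n:ℤ)+1-1 = ((n:ℕ):ℤ) by ring]
      rw [show (n:ℤ)+1+1 = ((n+2:ℕ):ℤ) by push_cast; ring]
      rw [hSn', hSn']
    have hD : D (n:ℤ) = Set.uIcc 0 (c (Fb (n+2))) := by rw [hDdef, hSn']
    have hQpos : 0 < lam ^ (Fb (n+2)) * |c (Fb (n+4))| :=
      mul_pos (pow_pos hlam0 _) (hApos (n+3))
    have hgap1 := (hGap n).1
    have h5pos : 0 < |c (Fb (n+5))| := hApos (n+4)
    have hbp : 0 < |c (Fb (n+2))| - lam ^ (Fb (n+2)) * |c (Fb (n+4))| := lt_trans h5pos hgap1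
    have hIeven : Odd n → I ((n:ℤ)+1) = Set.uIcc (c (Fb (n+3))) (c (Fb (n+4))) := by
      intro hod
      have hE : Even ((n:ℤ)+1) := by
        rw [Int.even_add_one]
        simpa using (Nat.not_even_iff_odd.mpr hod)
      rw [((hIdef ((n:ℤ)+1) (by omega)).1) hE]
      rw [show (n:ℤ)+1 = ((n+1:ℕ):ℤ) by push_cast; ring]
      rw [show ((n+1:ℕ):ℤ)+1 = ((n+2:ℕ):ℤ) by push_cast; ring]
      rw [hSn', hSn']
    have hIodd : Even n → I ((n:ℤ)+1) = Set.uIcc (c (Fb (n+3))) (c (Fb (n+5))) := by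
      intro hev
      have hnotE : ¬ Even ((n:ℤ)+1) := by
        rw [Int.even_add_one, not_not]
        exact_mod_cast hev
      rw [((hIdef ((n:ℤ)+1) (by omega)).2) hnotE]
      rw [show (n:ℤ)+1 = ((n+1:ℕ):ℤ) by push_cast; ring]
      rw [show ((n+1:ℕ):ℤ)+2 = ((n+3:ℕ):ℤ) by push_cast; ring]
      rw [hSn', hSn']
    rcases (hcneF (n+1)).lt_or_gt with hx0 | hx0
    · -- c (Fb (n+2)) < 0
      have hxabs : |c (Fb (n+2))| = -c (Fb (n+2)) := abs_of_neg hx0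
      have hNv : c (Fb (n+4) + Fb (n+2)) =
          c (Fb (n+2)) + lam ^ (Fb (n+2)) * |c (Fb (n+4))| := by
        have h := (hposMain n).2 hx0
        rw [hxabs] at h
        rw [h]; ring
      rw [hxabs] at hgap1 hbp
      have hNneg : c (Fb (n+4) + Fb (n+2)) < 0 := by rw [hNv]; linarith
      refine ⟨?_, ?_, ?_⟩
      · rw [hJ, hD]
        apply Set.uIcc_subset_uIcc Set.right_mem_uIcc
        rw [Set.mem_uIcc]
        right
        exact ⟨by rw [hNv]; linarith, hNneg.le⟩
      · rw [hJ]
        intro hmem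
        rw [Set.mem_uIcc] at hmem
        rcases hmem with ⟨h1, h2⟩ | ⟨h1, h2⟩
        · linarith [hNneg]
        · linarith [hx0]
      · rcases Nat.even_or_odd n with hev | hod
        · have hI := hIodd hev
          have h42 : n % 4 = 2 := by
            have h2 := Nat.even_iff.mp hev
            by_contra hne
            exact absurd ((hsgn n).1 (Or.inl (by omega))) (not_lt.mpr hx0.le)
          have hsgn3 : 0 < c (Fb (n+3)) := (hsgn (n+1)).1 (by omega)
          have h5lb : -|c (Fb (n+5))| ≤ c (Fb (n+5)) := neg_abs_le _
          apply Set.eq_empty_iff_forall_notMem.mpr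
          rintro z ⟨hzJ, hzI⟩
          rw [hJ, Set.mem_uIcc, hNv] at hzJ
          rw [hI, Set.mem_uIcc] at hzI
          rcases hzJ with ⟨h1, h2⟩ | ⟨h1, h2⟩ <;> rcases hzI with ⟨h3, h4⟩ | ⟨h3, h4⟩ <;>
            linarith
        · have hI := hIeven hod
          have hgap2 := (hGap n).2 (by rcases hod with ⟨t, rfl⟩; omega)
          rw [hxabs] at hgap2
          have h3lb : -|c (Fb (n+3))| ≤ c (Fb (n+3)) := neg_abs_le _
          have h4lb : -|c (Fb (n+4))| ≤ c (Fb (n+4)) := neg_abs_le _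
          have h43 : |c (Fb (n+4))| < |c (Fb (n+3))| := hdecN (n+1)
          apply Set.eq_empty_iff_forall_notMem.mpr
          rintro z ⟨hzJ, hzI⟩
          rw [hJ, Set.mem_uIcc, hNv] at hzJ
          rw [hI, Set.mem_uIcc] at hzI
          rcases hzJ with ⟨h1, h2⟩ | ⟨h1, h2⟩ <;> rcases hzI with ⟨h3, h4⟩ | ⟨h3, h4⟩ <;>
            linarith
    · -- 0 < c (Fb (n+2))
      have hxabs : |c (Fb (n+2))| = c (Fb (n+2)) := abs_of_pos hx0
      have hNv : c (Fb (n+4) + Fb (n+2)) =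
          c (Fb (n+2)) - lam ^ (Fb (n+2)) * |c (Fb (n+4))| := by
        have h := (hposMain n).1 hx0
        rwa [hxabs] at h
      rw [hxabs] at hgap1 hbp
      have hNpos : 0 < c (Fb (n+4) + Fb (n+2)) := by rw [hNv]; linarith
      refine ⟨?_, ?_, ?_⟩
      · rw [hJ, hD]
        apply Set.uIcc_subset_uIcc Set.right_mem_uIcc
        rw [Set.mem_uIcc]
        left
        exact ⟨hNpos.le, by rw [hNv]; linarith⟩
      · rw [hJ]
        intro hmem
        rw [Set.mem_uIcc] at hmem
        rcases hmem with ⟨h1, h2⟩ | ⟨h1, h2⟩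
        · linarith [hx0]
        · linarith [hNpos]
      · rcases Nat.even_or_odd n with hev | hod
        · have hI := hIodd hev
          have h40 : n % 4 = 0 := by
            have h2 := Nat.even_iff.mp hev
            by_contra hne
            exact absurd ((hsgn n).2 (by omega)) (not_lt.mpr hx0.le)
          have hsgn3 : c (Fb (n+3)) < 0 := (hsgn (n+1)).2 (by omega)
          have h5ub : c (Fb (n+5)) ≤ |c (Fb (n+5))| := le_abs_self _
          apply Set.eq_empty_iff_forall_notMem.mpr
          rintro z ⟨hzJ, hzI⟩
          rw [hJ, Set.mem_uIcc, hNv] at hzJ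
          rw [hI, Set.mem_uIcc] at hzI
          rcases hzJ with ⟨h1, h2⟩ | ⟨h1, h2⟩ <;> rcases hzI with ⟨h3, h4⟩ | ⟨h3, h4⟩ <;>
            linarith
        · have hI := hIeven hod
          have hgap2 := (hGap n).2 (by rcases hod with ⟨t, rfl⟩; omega)
          rw [hxabs] at hgap2
          have h3ub : c (Fb (n+3)) ≤ |c (Fb (n+3))| := le_abs_self _
          have h4ub : c (Fb (n+4)) ≤ |c (Fb (n+4))| := le_abs_self _
          have h43 : |c (Fb (n+4))| < |c (Fb (n+3))| := hdecN (n+1)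
          apply Set.eq_empty_iff_forall_notMem.mpr
          rintro z ⟨hzJ, hzI⟩
          rw [hJ, Set.mem_uIcc, hNv] at hzJ
          rw [hI, Set.mem_uIcc] at hzI
          rcases hzJ with ⟨h1, h2⟩ | ⟨h1, h2⟩ <;> rcases hzI with ⟨h3, h4⟩ | ⟨h3, h4⟩ <;>
            linarith
  have hDI : ∀ p m : ℕ, 1 ≤ p → p ≤ m → D (m:ℤ) ⊆ I (p:ℤ) := by
    intro p m hp hpm
    have hDm : D (m:ℤ) = Set.uIcc 0 (c (Fb (m+2))) := by rw [hDdef, hSn']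
    have hmono2 : |c (Fb (m+2))| ≤ |c (Fb (p+2))| := hAmono p m hpm
    rcases Nat.even_or_odd p with hev | hod
    · have hE : Even ((p:ℕ):ℤ) := by exact_mod_cast hev
      have hI : I (p:ℤ) = Set.uIcc (c (Fb (p+2))) (c (Fb (p+3))) := by
        rw [(hIdef (p:ℤ) (Int.natCast_nonneg _)).1 hE, hSn',
          show (p:ℤ)+1 = ((p+1:ℕ):ℤ) by push_cast; ring, hSn']
      rw [hDm, hI]
      have hp2 := Nat.even_iff.mp hev
      rcases (show p % 4 = 0 ∨ p % 4 = 2 by omega) with h4 | h4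
      · have he1 : 0 < c (Fb (p+2)) := (hsgn p).1 (Or.inl h4)
        have he2 : c (Fb (p+3)) < 0 := (hsgn (p+1)).2 (by omega)
        apply Set.uIcc_subset_uIcc
        · rw [Set.mem_uIcc]; right; exact ⟨he2.le, he1.le⟩
        · rw [Set.mem_uIcc]; right
          rcases (hcneF (m+1)).lt_or_gt with hz | hz
          · have hm4 : ¬ (m % 4 = 0 ∨ m % 4 = 3) := fun hh =>
              absurd ((hsgn m).1 hh) (not_lt.mpr hz.le)
            have hmono3 : |c (Fb (m+2))| ≤ |c (Fb (p+3))| := hAmono (p+1) m (by omega)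
            rw [abs_of_neg he2, abs_of_neg hz] at hmono3
            exact ⟨by linarith, by linarith⟩
          · rw [abs_of_pos he1] at hmono2
            exact ⟨by linarith, by linarith [le_abs_self (c (Fb (m+2)))]⟩
      · have he1 : c (Fb (p+2)) < 0 := (hsgn p).2 (by omega)
        have he2 : 0 < c (Fb (p+3)) := (hsgn (p+1)).1 (by omega)
        apply Set.uIcc_subset_uIcc
        · rw [Set.mem_uIcc]; left; exact ⟨he1.le, he2.le⟩
        · rw [Set.mem_uIcc]; left
          rcases (hcneF (m+1)).lt_or_gt with hz | hz
          · rw [abs_of_neg he1] at hmono2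
            exact ⟨by linarith [neg_abs_le (c (Fb (m+2)))], by linarith⟩
          · have hm4 : m % 4 = 0 ∨ m % 4 = 3 := by
              by_contra hh
              exact absurd ((hsgn m).2 hh) (not_lt.mpr hz.le)
            have hmono3 : |c (Fb (m+2))| ≤ |c (Fb (p+3))| := hAmono (p+1) m (by omega)
            rw [abs_of_pos he2] at hmono3
            exact ⟨by linarith, by linarith [le_abs_self (c (Fb (m+2)))]⟩
    · have hNE : ¬ Even ((p:ℕ):ℤ) := by
        rw [Int.even_coe_nat]
        exact Nat.not_even_iff_odd.mpr hod
      have hI : I (p:ℤ) = Set.uIcc (c (Fb (p+2))) (c (Fb (p+4))) := by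
        rw [(hIdef (p:ℤ) (Int.natCast_nonneg _)).2 hNE, hSn',
          show (p:ℤ)+2 = ((p+2:ℕ):ℤ) by push_cast; ring, hSn']
      rw [hDm, hI]
      have hp2 := Nat.odd_iff.mp hod
      rcases (show p % 4 = 1 ∨ p % 4 = 3 by omega) with h4 | h4
      · have he1 : c (Fb (p+2)) < 0 := (hsgn p).2 (by omega)
        have he2 : 0 < c (Fb (p+4)) := (hsgn (p+2)).1 (by omega)
        apply Set.uIcc_subset_uIcc
        · rw [Set.mem_uIcc]; left; exact ⟨he1.le, he2.le⟩
        · rw [Set.mem_uIcc]; left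
          rcases (hcneF (m+1)).lt_or_gt with hz | hz
          · rw [abs_of_neg he1] at hmono2
            exact ⟨by linarith [neg_abs_le (c (Fb (m+2)))], by linarith⟩
          · have hm4 : m % 4 = 0 ∨ m % 4 = 3 := by
              by_contra hh
              exact absurd ((hsgn m).2 hh) (not_lt.mpr hz.le)
            have hmono3 : |c (Fb (m+2))| ≤ |c (Fb (p+4))| := hAmono (p+2) m (by omega)
            rw [abs_of_pos he2] at hmono3
            exact ⟨by linarith, by linarith [le_abs_self (c (Fb (m+2)))]⟩
      · have he1 : 0 < c (Fb (p+2)) := (hsgn p).1 (Or.inr h4)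
        have he2 : c (Fb (p+4)) < 0 := (hsgn (p+2)).2 (by omega)
        apply Set.uIcc_subset_uIcc
        · rw [Set.mem_uIcc]; right; exact ⟨he2.le, he1.le⟩
        · rw [Set.mem_uIcc]; right
          rcases (hcneF (m+1)).lt_or_gt with hz | hz
          · have hm4 : ¬ (m % 4 = 0 ∨ m % 4 = 3) := fun hh =>
              absurd ((hsgn m).1 hh) (not_lt.mpr hz.le)
            have hmono3 : |c (Fb (m+2))| ≤ |c (Fb (p+4))| := hAmono (p+2) m (by omega)
            rw [abs_of_neg he2, abs_of_neg hz] at hmono3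
            exact ⟨by linarith, by linarith⟩
          · rw [abs_of_pos he1] at hmono2
            exact ⟨by linarith, by linarith [le_abs_self (c (Fb (m+2)))]⟩
  constructor
  · intro k hk
    lift k to ℕ using hk with n
    exact hMain n
  · intro k k' h0 hkk'
    lift k to ℕ using (by omega) with p
    lift k' to ℕ using (by omega) with m
    have hp : 1 ≤ p := by exact_mod_cast h0
    have hpm : p < m := by exact_mod_cast hkk'
    have hc1' : ((m-1:ℕ):ℤ) = (m:ℤ) - 1 := by omega
    have hJD : J (m:ℤ) ⊆ D ((m:ℤ)-1) := by
      have h := (hMain (m-1)).1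
      rwa [hc1', sub_add_cancel] at h
    have hDIm : D ((m:ℤ)-1) ⊆ I (p:ℤ) := by
      have h := hDI p (m-1) hp (by omega)
      rwa [hc1'] at h
    refine ⟨hJD, hDIm, ?_⟩
    have hJI : J (p:ℤ) ∩ I (p:ℤ) = ∅ := by
      have h := (hMain (p-1)).2.2
      rwa [show ((p-1:ℕ):ℤ) = (p:ℤ) - 1 by omega, sub_add_cancel] at h
    have : J (p:ℤ) ∩ J (m:ℤ) ⊆ J (p:ℤ) ∩ I (p:ℤ) :=
      Set.inter_subset_inter_right _ (hJD.trans hDIm)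
    rw [hJI] at this
    exact Set.eq_empty_of_subset_empty this
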